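/- For any Epstein model M = ⟨v, R⟩, the set S^M = {⟨v', R'⟩ : v' = v and R \ Ω^M ⊆ R' ⊆ R ∪ Ω^M} has cardinality 2^ℵ₀ (the cardinality of the continuum). -/
import Mathlib


/-- Epstein formulas: letters, ¬, ∨, ∧, →, ↔, △ (tri), ↪ (hook). -/
inductive EFor : Type
  | var : ℕ → EFor
  | neg : EFor → EFor
  | or : EFor → EFor → EFor
  | and : EFor → EFor → EFor
  | imp : EFor → EFor → EFor
  | iff : EFor → EFor → EFor
  | tri : EFor → EFor → EFor
  | hook : EFor → EFor → EFor
  deriving DecidableEq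

/-- An Epstein model: a valuation of letters and a binary relation on formulas. -/
structure EModel : Type where
  v : ℕ → Prop
  R : Set (EFor × EFor)

/-- Epstein satisfaction. -/
def sat (M : EModel) : EFor → Prop
  | .var n => M.v n
  | .neg φ => ¬ sat M φ
  | .or φ ψ => sat M φ ∨ sat M ψ
  | .and φ ψ => sat M φ ∧ sat M ψ
  | .imp φ ψ => sat M φ → sat M ψ
  | .iff φ ψ => (sat M φ ↔ sat M ψ)
  | .tri φ ψ => (sat M φ ∧ sat M ψ) ∧ (φ, ψ) ∈ M.R
  | .hook φ ψ => (sat M φ → sat M ψ) ∧ (φ, ψ) ∈ M.R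

/-- The Omega set of a model. -/
def Omega (M : EModel) : Set (EFor × EFor) :=
  {p | ¬ sat M (.imp p.1 p.2)}

/-- The S-set of a model. -/
def Sset (M : EModel) : Set EModel :=
  {N | N.v = M.v ∧ M.R \ Omega M ⊆ N.R ∧ N.R ⊆ M.R ∪ Omega M}

/-- The theory of a model. -/
def Th (M : EModel) : Set EFor := {φ | sat M φ}

/-- Substitution: extend a map on letters homomorphically. -/
def esubst (σ : ℕ → EFor) : EFor → EFor
  | .var n => σ n
  | .neg φ => .neg (esubst σ φ)
  | .or φ ψ => .or (esubst σ φ) (esubst σ ψ)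
  | .and φ ψ => .and (esubst σ φ) (esubst σ ψ)
  | .imp φ ψ => .imp (esubst σ φ) (esubst σ ψ)
  | .iff φ ψ => .iff (esubst σ φ) (esubst σ ψ)
  | .tri φ ψ => .tri (esubst σ φ) (esubst σ ψ)
  | .hook φ ψ => .hook (esubst σ φ) (esubst σ ψ)

/-- A boolean homomorphism: any assignment respecting the boolean connectives
(no constraint on △, ↪, which are treated as atoms). -/
def BoolHom (w : EFor → Prop) : Prop :=
  (∀ φ, w (.neg φ) ↔ ¬ w φ) ∧
  (∀ φ ψ, w (.or φ ψ) ↔ (w φ ∨ w ψ)) ∧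
  (∀ φ ψ, w (.and φ ψ) ↔ (w φ ∧ w ψ)) ∧
  (∀ φ ψ, w (.imp φ ψ) ↔ (w φ → w ψ)) ∧
  (∀ φ ψ, w (.iff φ ψ) ↔ (w φ ↔ w ψ))

/-- Classical tautologies in the language of Epstein logic. -/
def Taut (φ : EFor) : Prop := ∀ w, BoolHom w → w φ

/-- The logic FΛ: least set containing CPL, the two Epstein axioms and Λ,
closed under uniform substitution and modus ponens. -/
inductive FLam (Λ : Set EFor) : EFor → Prop
  | taut {φ} : Taut φ → FLam Λ φ
  | ax1 : FLam Λ (.imp (.hook (.var 0) (.var 1)) (.imp (.var 0) (.var 1)))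
  | ax2 : FLam Λ (.iff (.tri (.var 0) (.var 1))
      (.and (.hook (.var 0) (.var 1)) (.and (.var 0) (.var 1))))
  | extra {φ} : φ ∈ Λ → FLam Λ φ
  | subst {φ} (σ : ℕ → EFor) : FLam Λ φ → FLam Λ (esubst σ φ)
  | mp {φ ψ} : FLam Λ (.imp φ ψ) → FLam Λ φ → FLam Λ ψ

/-- The base logic F. -/
def Fmem : EFor → Prop := FLam ∅

/-- Hilbert derivability from premises Γ over a logic L. -/
inductive Deriv (L : EFor → Prop) (Γ : Set EFor) : EFor → Prop
  | thm {φ} : L φ → Deriv L Γ φ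
  | prem {φ} : φ ∈ Γ → Deriv L Γ φ
  | mp {φ ψ} : Deriv L Γ (.imp φ ψ) → Deriv L Γ φ → Deriv L Γ ψ

/-- Validity on a relation: true in all models built over it. -/
def relSat (R : Set (EFor × EFor)) (φ : EFor) : Prop :=
  ∀ v : ℕ → Prop, sat ⟨v, R⟩ φ

def etop : EFor := .or (.var 0) (.neg (.var 0))
def ebot : EFor := .neg etop


def ecode : EFor → ℕ
  | .var n => Nat.pair 0 n
  | .neg φ => Nat.pair 1 (ecode φ)
  | .or φ ψ => Nat.pair 2 (Nat.pair (ecode φ) (ecode ψ))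
  | .and φ ψ => Nat.pair 3 (Nat.pair (ecode φ) (ecode ψ))
  | .imp φ ψ => Nat.pair 4 (Nat.pair (ecode φ) (ecode ψ))
  | .iff φ ψ => Nat.pair 5 (Nat.pair (ecode φ) (ecode ψ))
  | .tri φ ψ => Nat.pair 6 (Nat.pair (ecode φ) (ecode ψ))
  | .hook φ ψ => Nat.pair 7 (Nat.pair (ecode φ) (ecode ψ))

set_option maxHeartbeats 800000 in
theorem ecode_inj : Function.Injective ecode := by
  intro a
  induction a with
  | var n => intro b h; cases b <;> simp_all [ecode, Nat.pair_eq_pair]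
  | neg φ ih => intro b h; cases b <;> simp_all [ecode, Nat.pair_eq_pair] <;> aesop
  | or φ ψ ih1 ih2 => intro b h; cases b <;> simp_all [ecode, Nat.pair_eq_pair] <;> aesop
  | and φ ψ ih1 ih2 => intro b h; cases b <;> simp_all [ecode, Nat.pair_eq_pair] <;> aesop
  | imp φ ψ ih1 ih2 => intro b h; cases b <;> simp_all [ecode, Nat.pair_eq_pair] <;> aesop
  | iff φ ψ ih1 ih2 => intro b h; cases b <;> simp_all [ecode, Nat.pair_eq_pair] <;> aesop
  | tri φ ψ ih1 ih2 => intro b h; cases b <;> simp_all [ecode, Nat.pair_eq_pair] <;> aesop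
  | hook φ ψ ih1 ih2 => intro b h; cases b <;> simp_all [ecode, Nat.pair_eq_pair] <;> aesop

instance : Countable EFor := ⟨ecode, ecode_inj⟩

def bigf (n : ℕ) : EFor := .or etop (.var n)

theorem bigf_mem_omega (M : EModel) (n : ℕ) : (bigf n, ebot) ∈ Omega M := by
  simp only [Omega, Set.mem_setOf_eq, sat, bigf, ebot, etop]
  intro h
  exact (h (Or.inl (Classical.em (M.v 0)))) (Classical.em (M.v 0))

theorem omega_infinite (M : EModel) : Infinite ↥(Omega M) := by
  apply Infinite.of_injective (fun n => (⟨(bigf n, ebot), bigf_mem_omega M n⟩ : ↥(Omega M)))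
  intro a b h
  simpa [bigf, etop] using h

theorem mk_omega (M : EModel) : Cardinal.mk ↥(Omega M) = Cardinal.aleph0 := by
  have := omega_infinite M
  exact Cardinal.mk_eq_aleph0 _

noncomputable def ssetEquiv (M : EModel) : ↥(Sset M) ≃ Set ↥(Omega M) where
  toFun N := {x | (x : EFor × EFor) ∈ N.val.R}
  invFun S := ⟨⟨M.v, (M.R \ Omega M) ∪ (Subtype.val '' S)⟩, by
    refine ⟨rfl, Set.subset_union_left, ?_⟩
    intro p hp
    rcases hp with hp | hp
    · exact Or.inl hp.1
    · rcases hp with ⟨q, _, rfl⟩; exact Or.inr q.2⟩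
  left_inv := by
    rintro ⟨⟨v, R⟩, hv, h1, h2⟩
    apply Subtype.ext
    simp only [EModel.mk.injEq]
    refine ⟨hv.symm, ?_⟩
    ext p
    constructor
    · rintro (hp | ⟨q, hq, rfl⟩)
      · exact h1 hp
      · exact hq
    · intro hp
      rcases h2 hp with h | h
      · by_cases hΩ : p ∈ Omega M
        · exact Or.inr ⟨⟨p, hΩ⟩, hp, rfl⟩
        · exact Or.inl ⟨h, hΩ⟩
      · exact Or.inr ⟨⟨p, h⟩, hp, rfl⟩
  right_inv := by
    intro S
    ext x
    simp only [Set.mem_setOf_eq, Set.mem_union, Set.mem_diff]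
    constructor
    · rintro (⟨_, hx⟩ | hx)
      · exact absurd x.2 hx
      · rcases hx with ⟨q, hq, hqx⟩
        rwa [Subtype.val_injective hqx] at hq
    · intro hx
      exact Or.inr ⟨x, hx, rfl⟩

/-- the S-set has cardinality 2^ℵ₀. -/
theorem stmt1 (M : EModel) : Cardinal.mk (↥(Sset M)) = 2 ^ Cardinal.aleph0 := by
  rw [Cardinal.mk_congr (ssetEquiv M), Cardinal.mk_set, mk_omega]
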